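/- There are K = K_b + K_m clients (1 ≤ K_m < K_b), clients 1,…,K_b benign and clients K_b+1,…,K malicious, each with a characterization vector v^(k) ∈ ℝ^H. Fix an integer p ≥ 1 and suppose ‖v^(k) − v̄‖_p ≤ r for every benign k ∈ {1,…,K_b}, where v̄ ∈ ℝ^H and r ≥ 0. Let B be a set of K_b client indices whose maliciousness scores are the K_b smallest (i.e. M(k) ≤ M(k') for every k ∈ B and k' ∉ B). Then every malicious client m ∈ B ∩ {K_b+1,…,K} satisfies ‖v^(m) − v̄‖_p ≤ 2(K_b−1)·r/(K_b−K_m) + r. -/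

import Mathlib

open Finset

/-- The ℓ_p norm on `ℝ^H` for an integer `p ≥ 1`. -/
noncomputable def lpNorm {H : ℕ} (p : ℕ) (x : Fin H → ℝ) : ℝ :=
  (∑ i, |x i| ^ p) ^ ((1 : ℝ) / p)

/-- The maliciousness score of client `k`: `1/t` times the sum of the `t` smallest values
among the distances `d k k'` for `k' ≠ k` (the minimum over size-`t` subsets of the sum). -/
noncomputable def malScore {K : ℕ} (d : Fin K → Fin K → ℝ) (t : ℕ) (k : Fin K) : ℝ :=
  sInf {x : ℝ | ∃ S : Finset (Fin K),
    S ⊆ Finset.univ.erase k ∧ S.card = t ∧ x = ∑ k' ∈ S, d k k'} / t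

lemma lpNorm_nonneg {H : ℕ} (p : ℕ) (x : Fin H → ℝ) : 0 ≤ lpNorm p x :=
  Real.rpow_nonneg (Finset.sum_nonneg fun _ _ => pow_nonneg (abs_nonneg _) _) _

lemma lpNorm_triangle {H : ℕ} {p : ℕ} (hp : 1 ≤ p) (x y : Fin H → ℝ) :
    lpNorm p (fun i => x i + y i) ≤ lpNorm p x + lpNorm p y := by
  unfold lpNorm
  have hp1 : (1:ℝ) ≤ (p:ℝ) := by exact_mod_cast hp
  have := Real.Lp_add_le Finset.univ x y hp1
  simpa [← Real.rpow_natCast] using this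

lemma lpNorm_sub_comm {H : ℕ} (p : ℕ) (a b : Fin H → ℝ) :
    lpNorm p (fun i => a i - b i) = lpNorm p (fun i => b i - a i) := by
  simp [lpNorm, abs_sub_comm]

lemma lpNorm_dist_triangle {H : ℕ} {p : ℕ} (hp : 1 ≤ p) (a b c : Fin H → ℝ) :
    lpNorm p (fun i => a i - c i) ≤
      lpNorm p (fun i => a i - b i) + lpNorm p (fun i => b i - c i) := by
  have := lpNorm_triangle hp (fun i => a i - b i) (fun i => b i - c i)
  simpa [sub_add_sub_cancel] using this

lemma malScore_set_eq {K : ℕ} (d : Fin K → Fin K → ℝ) (t : ℕ) (k : Fin K) :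
    {x : ℝ | ∃ S : Finset (Fin K), S ⊆ Finset.univ.erase k ∧ S.card = t ∧ x = ∑ k' ∈ S, d k k'}
    = ↑(((Finset.univ.erase k).powersetCard t).image (fun S => ∑ k' ∈ S, d k k')) := by
  ext x
  simp only [Set.mem_setOf_eq, Finset.coe_image, Set.mem_image, Finset.mem_coe,
    Finset.mem_powersetCard]
  constructor
  · rintro ⟨S, h1, h2, rfl⟩; exact ⟨S, ⟨h1, h2⟩, rfl⟩
  · rintro ⟨S, ⟨h1, h2⟩, rfl⟩; exact ⟨S, h1, h2, rfl⟩

lemma malScore_le {K : ℕ} (d : Fin K → Fin K → ℝ) {t : ℕ} (ht : 0 < t) (k : Fin K)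
    (S : Finset (Fin K)) (hS : S ⊆ Finset.univ.erase k) (hcard : S.card = t) :
    malScore d t k ≤ (∑ k' ∈ S, d k k') / t := by
  unfold malScore
  rw [malScore_set_eq]
  have hle : sInf ↑(((Finset.univ.erase k).powersetCard t).image (fun S => ∑ k' ∈ S, d k k'))
      ≤ ∑ k' ∈ S, d k k' := csInf_le (Finset.bddBelow _)
      (by
        simp only [Finset.mem_coe, Finset.mem_image, Finset.mem_powersetCard]
        exact ⟨S, ⟨hS, hcard⟩, rfl⟩)
  have ht' : (0:ℝ) < t := by exact_mod_cast ht
  exact div_le_div_of_nonneg_right hle ht'.le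

lemma malScore_exists {K : ℕ} (d : Fin K → Fin K → ℝ) {t : ℕ} (k : Fin K)
    (ht : t ≤ K - 1) :
    ∃ S : Finset (Fin K), S ⊆ Finset.univ.erase k ∧ S.card = t ∧
      malScore d t k = (∑ k' ∈ S, d k k') / t := by
  have hK : 0 < K := k.pos
  have hcard : t ≤ (Finset.univ.erase k).card := by
    rw [Finset.card_erase_of_mem (Finset.mem_univ k), Finset.card_univ, Fintype.card_fin]
    exact ht
  obtain ⟨S0, hS0⟩ := Finset.exists_subset_card_eq hcard
  have hne : (((Finset.univ.erase k).powersetCard t).image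
      (fun S => ∑ k' ∈ S, d k k')).Nonempty := by
    refine ⟨∑ k' ∈ S0, d k k', ?_⟩
    simp only [Finset.mem_image, Finset.mem_powersetCard]
    exact ⟨S0, ⟨hS0.1, hS0.2⟩, rfl⟩
  have hmem := Set.Nonempty.csInf_mem (s := (↑(((Finset.univ.erase k).powersetCard t).image
      (fun S => ∑ k' ∈ S, d k k')) : Set ℝ)) (Finset.coe_nonempty.2 hne) (Finset.finite_toSet _)
  rw [Finset.mem_coe, Finset.mem_image] at hmem
  obtain ⟨S, hSmem, hSeq⟩ := hmem
  rw [Finset.mem_powersetCard] at hSmem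
  refine ⟨S, hSmem.1, hSmem.2, ?_⟩
  unfold malScore
  rw [malScore_set_eq, hSeq]

/-- with `K = K_b + K_m` clients (`1 ≤ K_m < K_b`; clients with index
`< K_b` benign), if all benign characterization vectors lie within ℓ_p distance `r` of
`v̄`, and `B` is a set of `K_b` clients whose maliciousness scores are the `K_b`
smallest, then every malicious client `m ∈ B` satisfies
`‖v⁽ᵐ⁾ - v̄‖_p ≤ 2(K_b - 1)·r/(K_b - K_m) + r`. -/
theorem malicious_in_benign_set_close (H Kb Km : ℕ) (hKm1 : 1 ≤ Km) (hKm : Km < Kb)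
    (p : ℕ) (hp : 1 ≤ p)
    (v : Fin (Kb + Km) → Fin H → ℝ) (vbar : Fin H → ℝ) (r : ℝ) (hr : 0 ≤ r)
    (hben : ∀ k : Fin (Kb + Km), (k : ℕ) < Kb → lpNorm p (fun i => v k i - vbar i) ≤ r)
    (B : Finset (Fin (Kb + Km))) (hBcard : B.card = Kb)
    (hBmin : ∀ k ∈ B, ∀ k' ∉ B,
      malScore (fun k1 k2 => lpNorm p (fun i => v k1 i - v k2 i)) (Kb - 1) k ≤
        malScore (fun k1 k2 => lpNorm p (fun i => v k1 i - v k2 i)) (Kb - 1) k')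
    (m : Fin (Kb + Km)) (hmB : m ∈ B) (hm : Kb ≤ (m : ℕ)) :
    lpNorm p (fun i => v m i - vbar i) ≤
      2 * ((Kb : ℝ) - 1) * r / ((Kb : ℝ) - (Km : ℝ)) + r := by
  classical
  set d : Fin (Kb + Km) → Fin (Kb + Km) → ℝ :=
    fun k1 k2 => lpNorm p (fun i => v k1 i - v k2 i) with hd
  set t : ℕ := Kb - 1 with htdef
  have hKb2 : 2 ≤ Kb := by omega
  have ht1 : 1 ≤ t := by omega
  have htpos : (0:ℝ) < t := by exact_mod_cast ht1
  have htR : (t:ℝ) = (Kb:ℝ) - 1 := by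
    rw [htdef, Nat.cast_sub (by omega)]; norm_num
  have hdenom : (0:ℝ) < (Kb:ℝ) - (Km:ℝ) := by
    have : (Km:ℝ) < (Kb:ℝ) := by exact_mod_cast hKm
    linarith
  -- the set of benign clients
  set Ben : Finset (Fin (Kb + Km)) :=
    Finset.univ.filter (fun k => (k:ℕ) < Kb) with hBen
  have hBenCard : Ben.card = Kb := by
    have himg : Ben = (Finset.univ : Finset (Fin Kb)).image
        (fun j => (Fin.castLE (Nat.le_add_right _ _) j)) := by
      ext k
      simp only [hBen, Finset.mem_filter, Finset.mem_univ, true_and, Finset.mem_image]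
      constructor
      · intro hk; exact ⟨⟨(k:ℕ), hk⟩, Fin.ext rfl⟩
      · rintro ⟨j, rfl⟩; simpa using j.isLt
    rw [himg, Finset.card_image_of_injective _ (Fin.castLE_injective _), Finset.card_univ,
      Fintype.card_fin]
  -- distances between benign clients are at most 2r
  have hd_ben : ∀ j : Fin (Kb + Km), (j:ℕ) < Kb → ∀ j' : Fin (Kb + Km), (j':ℕ) < Kb →
      d j j' ≤ 2 * r := by
    intro j hj j' hj'
    have h1 := hben j hj
    have h2 := hben j' hj'
    have htri := lpNorm_dist_triangle hp (v j) vbar (v j')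
    have hsym : lpNorm p (fun i => vbar i - v j' i) = lpNorm p (fun i => v j' i - vbar i) :=
      lpNorm_sub_comm p _ _
    rw [hsym] at htri
    calc d j j' ≤ lpNorm p (fun i => v j i - vbar i) + lpNorm p (fun i => v j' i - vbar i) :=
          htri
      _ ≤ r + r := add_le_add h1 h2
      _ = 2 * r := by ring
  -- there is a benign client outside B
  obtain ⟨b, hbBen, hbB⟩ : ∃ b, b ∈ Ben ∧ b ∉ B := by
    by_contra h
    push_neg at h
    have hmnot : m ∉ Ben := by simp [hBen]; omega
    have hsub : insert m Ben ⊆ B := by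
      intro x hx
      rcases Finset.mem_insert.1 hx with rfl | hx
      · exact hmB
      · exact h x hx
    have := Finset.card_le_card hsub
    rw [Finset.card_insert_of_notMem hmnot, hBenCard, hBcard] at this
    omega
  have hbval : (b:ℕ) < Kb := by
    simpa [hBen] using hbBen
  -- the score of b is at most 2r
  have hMb : malScore d t b ≤ 2 * r := by
    have hSb_sub : Ben.erase b ⊆ Finset.univ.erase b := by
      intro x hx
      rcases Finset.mem_erase.1 hx with ⟨hx1, _⟩
      exact Finset.mem_erase.2 ⟨hx1, Finset.mem_univ x⟩
    have hSb_card : (Ben.erase b).card = t := by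
      rw [Finset.card_erase_of_mem hbBen, hBenCard]
    have hle := malScore_le d (by omega) b (Ben.erase b) hSb_sub hSb_card
    have hsum : ∑ k' ∈ Ben.erase b, d b k' ≤ t * (2 * r) := by
      calc ∑ k' ∈ Ben.erase b, d b k' ≤ ∑ _k' ∈ Ben.erase b, (2 * r) := by
            refine Finset.sum_le_sum ?_
            intro j hj
            have hj' : (j:ℕ) < Kb := by
              have := (Finset.mem_erase.1 hj).2
              simpa [hBen] using this
            exact hd_ben b hbval j hj'
        _ = t * (2 * r) := by rw [Finset.sum_const, hSb_card, nsmul_eq_mul]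
    calc malScore d t b ≤ (∑ k' ∈ Ben.erase b, d b k') / t := hle
      _ ≤ (t * (2 * r)) / t := div_le_div_of_nonneg_right hsum htpos.le
      _ = 2 * r := by field_simp
  -- hence the score of m is at most 2r
  have hMm : malScore d t m ≤ 2 * r := le_trans (hBmin m hmB b hbB) hMb
  -- the score of m is attained by some set S₀
  obtain ⟨S₀, hS₀sub, hS₀card, hS₀eq⟩ := malScore_exists d m (t := t) (by omega)
  have hsumS₀ : ∑ k' ∈ S₀, d m k' ≤ 2 * r * t := by
    have := hS₀eq ▸ hMm
    rw [div_le_iff₀ htpos] at this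
    linarith
  -- S₀ contains at least Kb - Km benign clients
  set S₀b : Finset (Fin (Kb + Km)) := S₀.filter (fun k => (k:ℕ) < Kb) with hS₀b
  have hS₀bcard : Kb - Km ≤ S₀b.card := by
    have hsplit := Finset.card_filter_add_card_filter_not
      (s := S₀) (p := fun k => (k:ℕ) < Kb)
    have hmal_sub : S₀.filter (fun k : Fin (Kb + Km) => ¬ ((k:ℕ) < Kb)) ⊆
        (Finset.univ.filter (fun k : Fin (Kb + Km) => ¬ ((k:ℕ) < Kb))).erase m := by
      intro x hx
      rcases Finset.mem_filter.1 hx with ⟨hx1, hx2⟩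
      have hxm : x ≠ m := (Finset.mem_erase.1 (hS₀sub hx1)).1
      exact Finset.mem_erase.2 ⟨hxm, Finset.mem_filter.2 ⟨Finset.mem_univ x, hx2⟩⟩
    have hmalcard : (Finset.univ.filter (fun k : Fin (Kb + Km) => ¬ ((k:ℕ) < Kb))).card = Km := by
      have huniv := Finset.card_filter_add_card_filter_not
        (s := (Finset.univ : Finset (Fin (Kb + Km)))) (p := fun k => (k:ℕ) < Kb)
      rw [Finset.card_univ, Fintype.card_fin] at huniv
      have : (Finset.univ.filter (fun k : Fin (Kb + Km) => (k:ℕ) < Kb)).card = Kb := hBenCard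
      omega
    have hmmem : m ∈ Finset.univ.filter (fun k : Fin (Kb + Km) => ¬ ((k:ℕ) < Kb)) :=
      Finset.mem_filter.2 ⟨Finset.mem_univ m, by omega⟩
    have hmal_le : (S₀.filter (fun k : Fin (Kb + Km) => ¬ ((k:ℕ) < Kb))).card ≤ Km - 1 := by
      have := Finset.card_le_card hmal_sub
      rw [Finset.card_erase_of_mem hmmem, hmalcard] at this
      exact this
    have h1 : S₀b.card + (S₀.filter (fun k : Fin (Kb + Km) => ¬ ((k:ℕ) < Kb))).card = t := by
      rw [← hS₀card]; exact hsplit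
    omega
  set D : ℝ := lpNorm p (fun i => v m i - vbar i) with hD
  by_cases hDr : D ≤ r
  · have hnum : 0 ≤ 2 * ((Kb : ℝ) - 1) * r := by
      have h1 : (1:ℝ) ≤ (Kb:ℝ) := by exact_mod_cast (by omega : 1 ≤ Kb)
      have h2 : (0:ℝ) ≤ 2 * ((Kb : ℝ) - 1) := by linarith
      exact mul_nonneg h2 hr
    have : 0 ≤ 2 * ((Kb : ℝ) - 1) * r / ((Kb : ℝ) - (Km : ℝ)) := div_nonneg hnum hdenom.le
    linarith
  · push_neg at hDr
    -- for benign j, d m j ≥ D - r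
    have hd_lower : ∀ j : Fin (Kb + Km), (j:ℕ) < Kb → D - r ≤ d m j := by
      intro j hj
      have htri := lpNorm_dist_triangle hp (v m) (v j) vbar
      have := hben j hj
      have : D ≤ d m j + r := le_trans htri (by exact add_le_add_right (hben j hj) _)
      linarith
    have hlow : (S₀b.card : ℝ) * (D - r) ≤ ∑ k' ∈ S₀b, d m k' := by
      have := Finset.card_nsmul_le_sum S₀b (fun k' => d m k') (D - r)
        (fun j hj => hd_lower j (Finset.mem_filter.1 hj).2)
      simpa [nsmul_eq_mul] using this
    have hsub_sum : ∑ k' ∈ S₀b, d m k' ≤ ∑ k' ∈ S₀, d m k' :=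
      Finset.sum_le_sum_of_subset_of_nonneg (Finset.filter_subset _ _)
        (fun j _ _ => lpNorm_nonneg p _)
    have hcardR : (Kb:ℝ) - (Km:ℝ) ≤ (S₀b.card : ℝ) := by
      have h1 : ((Kb - Km : ℕ) : ℝ) ≤ (S₀b.card : ℝ) := by exact_mod_cast hS₀bcard
      rwa [Nat.cast_sub (le_of_lt hKm)] at h1
    have hDpos : 0 < D - r := by linarith
    have hkey : ((Kb:ℝ) - (Km:ℝ)) * (D - r) ≤ 2 * ((Kb:ℝ) - 1) * r := by
      calc ((Kb:ℝ) - (Km:ℝ)) * (D - r) ≤ (S₀b.card : ℝ) * (D - r) := by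
            exact mul_le_mul_of_nonneg_right hcardR hDpos.le
        _ ≤ ∑ k' ∈ S₀b, d m k' := hlow
        _ ≤ ∑ k' ∈ S₀, d m k' := hsub_sum
        _ ≤ 2 * r * t := hsumS₀
        _ = 2 * ((Kb:ℝ) - 1) * r := by rw [htR]; ring
    have : D - r ≤ 2 * ((Kb:ℝ) - 1) * r / ((Kb:ℝ) - (Km:ℝ)) := by
      rw [le_div_iff₀ hdenom]
      linarith [hkey]
    linarith
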